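/- Let X be a finite poset, F a field with more than 2 elements (of arbitrary characteristic), and B an associative F-algebra. Then every F-linear map φ: I(X,F) → B that preserves idempotents satisfies φ(fg + gf) = φ(f)φ(g) + φ(g)φ(f) for all f, g ∈ I(X,F). -/

import Mathlib

open IncidenceAlgebra

/-- A poset is connected if any two elements can be joined by a sequence of elements
in which consecutive elements are comparable. -/
def PosetConnected (X : Type*) [PartialOrder X] : Prop :=
  ∀ x y : X, Relation.ReflTransGen (fun a b : X => a ≤ b ∨ b ≤ a) x y

section Aux

open Finset
open scoped Classical
set_option linter.unusedSectionVars false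

variable {X : Type*} [PartialOrder X] [Fintype X] [LocallyFiniteOrder X] [DecidableEq X]
variable {F : Type*} [Field F]

/-- single-entry element of the incidence algebra -/
noncomputable def Ee (F : Type*) [Field F] {X : Type*} [PartialOrder X] [DecidableEq X] (x y : X) :
    IncidenceAlgebra F X :=
  ⟨fun a b => if a = x ∧ b = y ∧ x ≤ y then 1 else 0, by
    intro a b h
    simp only [ite_eq_right_iff, and_imp, one_ne_zero]
    rintro rfl rfl hxy; exact absurd hxy h⟩

lemma Ee_apply (x y a b : X) :
    (Ee F x y) a b = if a = x ∧ b = y ∧ x ≤ y then 1 else 0 := rfl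

lemma Ee_mul (x y z w : X) :
    Ee F x y * Ee F z w =
      if y = z ∧ x ≤ y ∧ z ≤ w then Ee F x w else 0 := by
  split_ifs with h
  · obtain ⟨rfl, hxy, hyw⟩ := h
    ext a b hab
    rw [mul_apply, Finset.sum_eq_single y]
    · simp only [Ee_apply]
      by_cases h1 : a = x <;> by_cases h2 : b = w <;>
        simp [h1, h2, hxy, hyw, hxy.trans hyw]
    · intro t ht hty
      simp [Ee_apply, hty]
    · intro hy
      simp only [Ee_apply]
      rw [mem_Icc, not_and_or] at hy
      by_cases h1 : a = x <;> by_cases h2 : b = w <;>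
        simp_all [hxy, hyw, hxy.trans hyw]
  · ext a b hab
    rw [mul_apply]
    refine Finset.sum_eq_zero fun t ht => ?_
    simp only [Ee_apply, IncidenceAlgebra.zero_apply]
    split_ifs with h1 h2
    · exact absurd ⟨h1.2.1.symm.trans h2.1, h1.2.2, h2.2.2⟩ h
    all_goals simp

lemma smul_mul_Ee (c : F) (f g : IncidenceAlgebra F X) : (c • f) * g = c • (f * g) := by
  ext a b _
  simp [mul_apply, constSMul_apply, Finset.mul_sum, mul_assoc]

lemma mul_smul_Ee (c : F) (f g : IncidenceAlgebra F X) : f * (c • g) = c • (f * g) := by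
  ext a b _
  simp [mul_apply, constSMul_apply, Finset.mul_sum, mul_left_comm]

lemma IA_sum_apply {ι : Type*} (s : Finset ι) (g : ι → IncidenceAlgebra F X) (a b : X) :
    (∑ i ∈ s, g i) a b = ∑ i ∈ s, g i a b := by
  induction s using Finset.cons_induction with
  | empty => simp [IncidenceAlgebra.zero_apply]
  | cons i s hi ih => rw [Finset.sum_cons, Finset.sum_cons, IncidenceAlgebra.add_apply, ih]

lemma eq_sum_Ee (f : IncidenceAlgebra F X) :
    f = ∑ p : X × X, f p.1 p.2 • Ee F p.1 p.2 := by
  ext a b hab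
  rw [IA_sum_apply]
  rw [Finset.sum_eq_single (a, b)]
  · simp [constSMul_apply, Ee_apply, hab]
  · rintro ⟨u, v⟩ _ hp
    simp only [constSMul_apply, Ee_apply, smul_eq_mul, mul_ite, mul_one, mul_zero,
      ite_eq_right_iff, and_imp]
    rintro rfl rfl _
    exact absurd rfl hp
  · simp

lemma Ee_of_not_le {x y : X} (h : ¬x ≤ y) : Ee F x y = 0 := by
  ext a b _
  simp only [Ee_apply, IncidenceAlgebra.zero_apply, ite_eq_right_iff, and_imp]
  rintro rfl rfl h'
  exact absurd h' h

lemma exists_ne01 (hcard : 2 < Cardinal.mk F) : ∃ c : F, c ≠ 0 ∧ c ≠ 1 := by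
  by_contra h
  push_neg at h
  have hsub : (Set.univ : Set F) ⊆ {0, 1} := by
    intro c _
    rcases eq_or_ne c 0 with rfl | hc
    · exact Or.inl rfl
    · exact Or.inr (h c hc)
  have h2 : Cardinal.mk F ≤ 2 := by
    calc Cardinal.mk F = Cardinal.mk (Set.univ : Set F) := (Cardinal.mk_univ).symm
      _ ≤ Cardinal.mk ({0, 1} : Set F) := Cardinal.mk_le_mk_of_subset hsub
      _ ≤ Cardinal.mk ({1} : Set F) + 1 := Cardinal.mk_insert_le
      _ = 2 := by rw [Cardinal.mk_singleton]; norm_num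
  exact absurd hcard (not_lt.2 h2)

section Main
variable {B : Type*} [NonUnitalRing B] [Module F B] [SMulCommClass F B B] [IsScalarTower F B B]
variable (φ : IncidenceAlgebra F X →ₗ[F] B)
variable (hidem : ∀ f : IncidenceAlgebra F X, f * f = f → φ f * φ f = φ f)
variable (hcard : 2 < Cardinal.mk F)
include hidem hcard

lemma ctrick {e u : IncidenceAlgebra F X} (he : e * e = e) (heu : e * u + u * e = u)
    (huu : u * u = 0) :
    φ u * φ u = 0 ∧ φ e * φ u + φ u * φ e = φ u := by
  obtain ⟨c, hc0, hc1⟩ := exists_ne01 hcard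
  set A := φ e * φ u + φ u * φ e - φ u with hA
  set W := φ u * φ u with hW
  have key : ∀ d : F, d • A + (d * d) • W = 0 := by
    intro d
    have hq : (e + d • u) * (e + d • u) = e + d • u := by
      have : (e + d • u) * (e + d • u)
          = e * e + (d • (e * u + u * e) + (d * d) • (u * u)) := by
        rw [mul_add, add_mul, add_mul, mul_smul_Ee, smul_mul_Ee, smul_mul_Ee, mul_smul_Ee,
          smul_smul, smul_add]
        abel
      rw [this, he, heu, huu, smul_zero, add_zero]
    have hB := hidem _ hq
    rw [map_add, map_smul] at hB
    have hexp : (φ e + d • φ u) * (φ e + d • φ u)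
        = φ e * φ e + (d • (φ e * φ u + φ u * φ e) + (d * d) • (φ u * φ u)) := by
      rw [mul_add, add_mul, add_mul, mul_smul_comm, smul_mul_assoc, smul_mul_assoc,
        mul_smul_comm, smul_smul, smul_add]
      abel
    rw [hexp, hidem e he] at hB
    -- hB : φ e + (d • (φe*φu + φu*φe) + (d*d) • W) = φ e + d • φ u
    have h0 : d • A + (d * d) • W
        = (φ e + (d • (φ e * φ u + φ u * φ e) + (d * d) • (φ u * φ u))) - (φ e + d • φ u) := by
      rw [hA, hW, smul_sub]
      abel
    rw [h0, hB, sub_self]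
  have k1 := key 1
  have kc := key c
  simp only [one_smul, one_mul] at k1
  -- k1 : A + W = 0
  have hWz : W = 0 := by
    have h1 : A = -W := by
      rw [← sub_eq_zero]; rw [← k1]; abel
    rw [h1] at kc
    have h2 : (c * c - c) • W = 0 := by
      rw [smul_neg] at kc
      rw [sub_smul, ← kc]
      abel
    have hne : c * c - c ≠ 0 := by
      have : c * c - c = c * (c - 1) := by ring
      rw [this]
      exact mul_ne_zero hc0 (sub_ne_zero.2 hc1)
    have := congrArg (fun v => (c * c - c)⁻¹ • v) h2
    simpa [smul_smul, inv_mul_cancel₀ hne] using this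
  constructor
  · exact hWz
  · have : A = 0 := by
      rw [← k1, hWz, add_zero]
    rw [hA, sub_eq_zero] at this
    exact this

lemma Rdiag (x : X) : φ (Ee F x x) * φ (Ee F x x) = φ (Ee F x x) :=
  hidem _ (by simp [Ee_mul])

lemma jord2 {a b : B} (h : (a + b) * (a + b) = a + b) (ha : a * a = a) (hb : b * b = b) :
    a * b + b * a = 0 := by
  have h0 : a * b + b * a = ((a + b) * (a + b) - (a + b)) - ((a * a - a) + (b * b - b)) := by
    simp only [mul_add, add_mul]; abel
  rw [h, ha, hb] at h0
  simpa using h0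

lemma Rorth {x z : X} (hxz : x ≠ z) :
    φ (Ee F x x) * φ (Ee F z z) + φ (Ee F z z) * φ (Ee F x x) = 0 := by
  have hq : (Ee F x x + Ee F z z) * (Ee F x x + Ee F z z) = Ee F x x + Ee F z z := by
    simp [mul_add, add_mul, Ee_mul, hxz, hxz.symm]
  have hB := hidem _ hq
  rw [map_add] at hB
  exact jord2 φ hidem hcard hB (Rdiag φ hidem hcard x) (Rdiag φ hidem hcard z)

lemma RXside {x y : X} (h : x < y) :
    φ (Ee F x y) * φ (Ee F x y) = 0 ∧
    φ (Ee F x x) * φ (Ee F x y) + φ (Ee F x y) * φ (Ee F x x) = φ (Ee F x y) :=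
  ctrick φ hidem hcard (by simp [Ee_mul]) (by simp [Ee_mul, h.le, h.ne']) (by simp [Ee_mul, h.ne'])

lemma RYside {x y : X} (h : x < y) :
    φ (Ee F y y) * φ (Ee F x y) + φ (Ee F x y) * φ (Ee F y y) = φ (Ee F x y) :=
  (ctrick φ hidem hcard (by simp [Ee_mul]) (by simp [Ee_mul, h.le, h.ne']) (by simp [Ee_mul, h.ne'])).2

lemma RPzU {x y z : X} (hxy : x ≤ y) (hzx : z ≠ x) (hzy : z ≠ y) :
    φ (Ee F z z) * φ (Ee F x y) + φ (Ee F x y) * φ (Ee F z z) = 0 := by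
  rcases hxy.lt_or_eq with h | rfl
  · set C := φ (Ee F z z) with hC
    set P := φ (Ee F x x) with hP
    set U := φ (Ee F x y) with hU
    have hq : (Ee F z z + Ee F x x + Ee F x y) * (Ee F z z + Ee F x x + Ee F x y)
        = Ee F z z + Ee F x x + Ee F x y := by
      simp [mul_add, add_mul, Ee_mul, h.le, h.ne, h.ne', hzx, hzx.symm, hzy, hzy.symm]
    have hB := hidem _ hq
    rw [map_add, map_add] at hB
    have h0 : C * U + U * C
        = ((C + P + U) * (C + P + U) - (C + P + U))
          - ((C * C - C) + (P * P - P) + (C * P + P * C) + ((P * U + U * P) - U) + U * U) := by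
      simp only [mul_add, add_mul]; abel
    rw [hB, Rdiag φ hidem hcard z, Rdiag φ hidem hcard x, Rorth φ hidem hcard hzx,
      (RXside φ hidem hcard h).2, (RXside φ hidem hcard h).1] at h0
    simpa [hC, hP, hU] using h0
  · exact Rorth φ hidem hcard hzx

lemma R6a {x y w : X} (hxy : x < y) (hxw : x < w) (hyw : y ≠ w) :
    φ (Ee F x y) * φ (Ee F x w) + φ (Ee F x w) * φ (Ee F x y) = 0 := by
  set P := φ (Ee F x x) with hP
  set U := φ (Ee F x y) with hU
  set V := φ (Ee F x w) with hV
  have hq : (Ee F x x + Ee F x y + Ee F x w) * (Ee F x x + Ee F x y + Ee F x w)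
      = Ee F x x + Ee F x y + Ee F x w := by
    simp [mul_add, add_mul, Ee_mul, hxy.le, hxy.ne, hxy.ne', hxw.le, hxw.ne, hxw.ne',
      hyw, hyw.symm]
  have hB := hidem _ hq
  rw [map_add, map_add] at hB
  have h0 : U * V + V * U
      = ((P + U + V) * (P + U + V) - (P + U + V))
        - ((P * P - P) + ((P * U + U * P) - U) + ((P * V + V * P) - V) + U * U + V * V) := by
    simp only [mul_add, add_mul]; abel
  rw [hB, Rdiag φ hidem hcard x, (RXside φ hidem hcard hxy).2, (RXside φ hidem hcard hxw).2,
    (RXside φ hidem hcard hxy).1, (RXside φ hidem hcard hxw).1] at h0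
  simpa [hP, hU, hV] using h0

lemma R6b {x y z : X} (hxy : x < y) (hzy : z < y) (hxz : x ≠ z) :
    φ (Ee F x y) * φ (Ee F z y) + φ (Ee F z y) * φ (Ee F x y) = 0 := by
  set P := φ (Ee F y y) with hP
  set U := φ (Ee F x y) with hU
  set V := φ (Ee F z y) with hV
  have hq : (Ee F y y + Ee F x y + Ee F z y) * (Ee F y y + Ee F x y + Ee F z y)
      = Ee F y y + Ee F x y + Ee F z y := by
    simp [mul_add, add_mul, Ee_mul, hxy.le, hxy.ne, hxy.ne', hzy.le, hzy.ne, hzy.ne',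
      hxz, hxz.symm]
  have hB := hidem _ hq
  rw [map_add, map_add] at hB
  have h0 : U * V + V * U
      = ((P + U + V) * (P + U + V) - (P + U + V))
        - ((P * P - P) + ((P * U + U * P) - U) + ((P * V + V * P) - V) + U * U + V * V) := by
    simp only [mul_add, add_mul]; abel
  rw [hB, Rdiag φ hidem hcard y, RYside φ hidem hcard hxy, RYside φ hidem hcard hzy,
    (RXside φ hidem hcard hxy).1, (RXside φ hidem hcard hzy).1] at h0
  simpa [hP, hU, hV] using h0

lemma R6c {x y z w : X} (hxy : x < y) (hzw : z < w) (hxz : x ≠ z) (hxw : x ≠ w)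
    (hyz : y ≠ z) (hyw : y ≠ w) :
    φ (Ee F x y) * φ (Ee F z w) + φ (Ee F z w) * φ (Ee F x y) = 0 := by
  set P := φ (Ee F x x) with hP
  set Q := φ (Ee F z z) with hQ
  set U := φ (Ee F x y) with hU
  set V := φ (Ee F z w) with hV
  have hq : (Ee F x x + Ee F x y + (Ee F z z + Ee F z w))
      * (Ee F x x + Ee F x y + (Ee F z z + Ee F z w))
      = Ee F x x + Ee F x y + (Ee F z z + Ee F z w) := by
    simp [mul_add, add_mul, Ee_mul, hxy.le, hxy.ne, hxy.ne', hzw.le, hzw.ne, hzw.ne',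
      hxz, hxz.symm, hxw, hxw.symm, hyz, hyz.symm, hyw, hyw.symm]
  have hB := hidem _ hq
  rw [map_add, map_add, map_add] at hB
  have h0 : U * V + V * U
      = ((P + U + (Q + V)) * (P + U + (Q + V)) - (P + U + (Q + V)))
        - ((P * P - P) + (Q * Q - Q) + (P * Q + Q * P) + ((P * U + U * P) - U)
          + ((Q * V + V * Q) - V) + (P * V + V * P) + (Q * U + U * Q) + U * U + V * V) := by
    simp only [mul_add, add_mul]; abel
  rw [hB, Rdiag φ hidem hcard x, Rdiag φ hidem hcard z, Rorth φ hidem hcard hxz,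
    (RXside φ hidem hcard hxy).2, (RXside φ hidem hcard hzw).2,
    RPzU φ hidem hcard hzw.le hxz hxw, RPzU φ hidem hcard hxy.le hxz.symm hyz.symm,
    (RXside φ hidem hcard hxy).1, (RXside φ hidem hcard hzw).1] at h0
  simpa [hP, hQ, hU, hV] using h0

lemma R7 {x y w : X} (hxy : x < y) (hyw : y < w) :
    φ (Ee F x y) * φ (Ee F y w) + φ (Ee F y w) * φ (Ee F x y) = φ (Ee F x w) := by
  have hxw : x < w := hxy.trans hyw
  set P := φ (Ee F y y) with hP
  set U := φ (Ee F x y) with hU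
  set V := φ (Ee F y w) with hV
  set S := φ (Ee F x w) with hS
  have hq : (Ee F y y + Ee F x y + Ee F y w + Ee F x w)
      * (Ee F y y + Ee F x y + Ee F y w + Ee F x w)
      = Ee F y y + Ee F x y + Ee F y w + Ee F x w := by
    simp [mul_add, add_mul, Ee_mul, hxy.le, hxy.ne, hxy.ne', hyw.le, hyw.ne, hyw.ne',
      hxw.le, hxw.ne, hxw.ne']
    abel
  have hB := hidem _ hq
  rw [map_add, map_add, map_add] at hB
  have h0 : (U * V + V * U) - S
      = ((P + U + V + S) * (P + U + V + S) - (P + U + V + S))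
        - ((P * P - P) + ((P * U + U * P) - U) + ((P * V + V * P) - V) + (P * S + S * P)
          + U * U + V * V + S * S + (U * S + S * U) + (V * S + S * V)) := by
    simp only [mul_add, add_mul]; abel
  rw [hB, Rdiag φ hidem hcard y, RYside φ hidem hcard hxy, (RXside φ hidem hcard hyw).2,
    RPzU φ hidem hcard hxw.le hxy.ne' hyw.ne,
    (RXside φ hidem hcard hxy).1, (RXside φ hidem hcard hyw).1, (RXside φ hidem hcard hxw).1,
    R6a φ hidem hcard hxy hxw hyw.ne, R6b φ hidem hcard hyw hxw hxy.ne'] at h0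
  rw [← sub_eq_zero]
  simpa [hP, hU, hV, hS] using h0

lemma key (x y z w : X) :
    φ (Ee F x y * Ee F z w + Ee F z w * Ee F x y)
      = φ (Ee F x y) * φ (Ee F z w) + φ (Ee F z w) * φ (Ee F x y) := by
  by_cases hxy : x ≤ y
  swap
  · simp [Ee_of_not_le hxy]
  by_cases hzw : z ≤ w
  swap
  · simp [Ee_of_not_le hzw]
  rcases hxy.lt_or_eq with hxy' | rfl
  · rcases hzw.lt_or_eq with hzw' | rfl
    · -- both strict
      by_cases hyz : y = z
      · subst hyz
        have hprod : Ee F x y * Ee F y w + Ee F y w * Ee F x y = Ee F x w := by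
          simp [Ee_mul, hxy'.le, hzw'.le, (hxy'.trans hzw').ne']
        rw [hprod, R7 φ hidem hcard hxy' hzw']
      · by_cases hwx : w = x
        · subst hwx
          have hprod : Ee F w y * Ee F z w + Ee F z w * Ee F w y = Ee F z y := by
            simp [Ee_mul, hxy'.le, hzw'.le, hyz]
          rw [hprod]
          calc φ (Ee F z y) = φ (Ee F z w) * φ (Ee F w y) + φ (Ee F w y) * φ (Ee F z w) :=
                (R7 φ hidem hcard hzw' hxy').symm
            _ = φ (Ee F w y) * φ (Ee F z w) + φ (Ee F z w) * φ (Ee F w y) := by abel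
        · have hprod : Ee F x y * Ee F z w + Ee F z w * Ee F x y = 0 := by
            simp [Ee_mul, hyz, hwx]
          rw [hprod, map_zero]
          by_cases hxz : x = z
          · subst hxz
            by_cases hyw : y = w
            · subst hyw
              rw [(RXside φ hidem hcard hxy').1]
              simp
            · exact (R6a φ hidem hcard hxy' hzw' hyw).symm
          · by_cases hyw : y = w
            · subst hyw
              exact (R6b φ hidem hcard hxy' hzw' hxz).symm
            · exact (R6c φ hidem hcard hxy' hzw' hxz (Ne.symm hwx) hyz hyw).symm
    · -- x < y, z = w (w eliminated, diag = Ee z z)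
      by_cases hzx : z = x
      · subst hzx
        have hprod : Ee F z y * Ee F z z + Ee F z z * Ee F z y = Ee F z y := by
          simp [Ee_mul, hxy'.le, hxy'.ne']
        rw [hprod]
        calc φ (Ee F z y) = φ (Ee F z z) * φ (Ee F z y) + φ (Ee F z y) * φ (Ee F z z) :=
              ((RXside φ hidem hcard hxy').2).symm
          _ = φ (Ee F z y) * φ (Ee F z z) + φ (Ee F z z) * φ (Ee F z y) := by abel
      · by_cases hzy : z = y
        · subst hzy
          have hprod : Ee F x z * Ee F z z + Ee F z z * Ee F x z = Ee F x z := by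
            simp [Ee_mul, hxy'.le, hxy'.ne']
          rw [hprod]
          calc φ (Ee F x z) = φ (Ee F z z) * φ (Ee F x z) + φ (Ee F x z) * φ (Ee F z z) :=
                (RYside φ hidem hcard hxy').symm
            _ = φ (Ee F x z) * φ (Ee F z z) + φ (Ee F z z) * φ (Ee F x z) := by abel
        · have hprod : Ee F x y * Ee F z z + Ee F z z * Ee F x y = 0 := by
            simp [Ee_mul, hzx, hzy, Ne.symm hzy, Ne.symm hzx]
          rw [hprod, map_zero, ← RPzU φ hidem hcard hxy'.le hzx hzy]
          abel
  · -- x = y (y eliminated)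
    rcases hzw.lt_or_eq with hzw' | rfl
    · by_cases hxz : x = z
      · subst hxz
        have hprod : Ee F x x * Ee F x w + Ee F x w * Ee F x x = Ee F x w := by
          simp [Ee_mul, hzw'.le, hzw'.ne']
        rw [hprod, (RXside φ hidem hcard hzw').2]
      · by_cases hxw : x = w
        · subst hxw
          have hprod : Ee F x x * Ee F z x + Ee F z x * Ee F x x = Ee F z x := by
            simp [Ee_mul, hzw'.le, hzw'.ne, hxz, Ne.symm hxz]
          rw [hprod, RYside φ hidem hcard hzw']
        · have hprod : Ee F x x * Ee F z w + Ee F z w * Ee F x x = 0 := by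
            simp [Ee_mul, hxz, hxw, Ne.symm hxz, Ne.symm hxw]
          rw [hprod, map_zero, RPzU φ hidem hcard hzw'.le hxz hxw]
    · by_cases hxz : x = z
      · subst hxz
        have hprod : Ee F x x * Ee F x x + Ee F x x * Ee F x x = Ee F x x + Ee F x x := by
          simp [Ee_mul]
        rw [hprod, map_add, Rdiag φ hidem hcard x]
      · have hprod : Ee F x x * Ee F z z + Ee F z z * Ee F x x = 0 := by
          simp [Ee_mul, hxz, Ne.symm hxz]
        rw [hprod, map_zero, Rorth φ hidem hcard hxz]

lemma jordan (f g : IncidenceAlgebra F X) :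
    φ (f * g + g * f) = φ f * φ g + φ g * φ f := by
  have hswap : ∀ u v : (X × X) → IncidenceAlgebra F X,
      (∑ p : X × X, u p) * (∑ q : X × X, v q)
        = ∑ p : X × X, ∑ q : X × X, u q * v p := by
    intro u v
    rw [Finset.sum_mul_sum]
    exact Finset.sum_comm
  have h1 : f * g + g * f
      = ∑ p : X × X, ∑ q : X × X, (f p.1 p.2 * g q.1 q.2)
          • (Ee F p.1 p.2 * Ee F q.1 q.2 + Ee F q.1 q.2 * Ee F p.1 p.2) := by
    conv_lhs => rw [eq_sum_Ee f, eq_sum_Ee g]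
    rw [Finset.sum_mul_sum, hswap, ← Finset.sum_add_distrib]
    refine sum_congr rfl fun p _ => ?_
    rw [← Finset.sum_add_distrib]
    refine sum_congr rfl fun q _ => ?_
    simp only [smul_mul_Ee, mul_smul_Ee, smul_smul]
    rw [mul_comm (g q.1 q.2) (f p.1 p.2), smul_add]
  have hswapB : ∀ u v : (X × X) → B,
      (∑ p : X × X, u p) * (∑ q : X × X, v q)
        = ∑ p : X × X, ∑ q : X × X, u q * v p := by
    intro u v
    rw [Finset.sum_mul_sum]
    exact Finset.sum_comm
  have h2 : φ f * φ g + φ g * φ f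
      = ∑ p : X × X, ∑ q : X × X, (f p.1 p.2 * g q.1 q.2)
          • (φ (Ee F p.1 p.2) * φ (Ee F q.1 q.2) + φ (Ee F q.1 q.2) * φ (Ee F p.1 p.2)) := by
    conv_lhs => rw [eq_sum_Ee f, eq_sum_Ee g]
    rw [map_sum, map_sum]
    simp only [map_smul]
    rw [Finset.sum_mul_sum, hswapB, ← Finset.sum_add_distrib]
    refine sum_congr rfl fun p _ => ?_
    rw [← Finset.sum_add_distrib]
    refine sum_congr rfl fun q _ => ?_
    simp only [smul_mul_assoc, mul_smul_comm, smul_smul]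
    rw [mul_comm (g q.1 q.2) (f p.1 p.2), smul_add]
  rw [h1, h2, map_sum]
  refine sum_congr rfl fun p _ => ?_
  rw [map_sum]
  refine sum_congr rfl fun q _ => ?_
  rw [map_smul, key φ hidem hcard p.1 p.2 q.1 q.2]

end Main


end Aux

/-- over a field with more than 2 elements, every linear idempotent preserver
from the incidence algebra of a finite poset into an associative algebra preserves the
Jordan product. -/
theorem stmt_3 {X : Type*} [PartialOrder X] [Fintype X] [LocallyFiniteOrder X] [DecidableEq X]
    {F : Type*} [Field F] (hcard : 2 < Cardinal.mk F)
    {B : Type*} [NonUnitalRing B] [Module F B] [SMulCommClass F B B] [IsScalarTower F B B]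
    (φ : IncidenceAlgebra F X →ₗ[F] B)
    (hidem : ∀ f : IncidenceAlgebra F X, f * f = f → φ f * φ f = φ f) :
    ∀ f g : IncidenceAlgebra F X, φ (f * g + g * f) = φ f * φ g + φ g * φ f := by
  intro f g
  exact jordan φ hidem hcard f g
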